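/- For the four-qubit tetrahedron state |Ψ₄⟩ = √(1/3)|S_{4,0}⟩ + √(2/3)|S_{4,3}⟩, the maximal overlap with symmetric product states is max_σ |⟨Ψ₄|σ^{⊗4}⟩|² = 1/3, so E_G(|Ψ₄⟩) = log₂ 3; the maximum is attained at |σ⟩ = |0⟩ (among others). -/

import Mathlib

open Finset

noncomputable def overlap {n : ℕ} (f g : (Fin n → Fin 2) → ℂ) : ℂ :=
  ∑ x : Fin n → Fin 2, (starRingEnd ℂ) (f x) * g x

noncomputable def symmPow (n : ℕ) (σ : Fin 2 → ℂ) : (Fin n → Fin 2) → ℂ :=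
  fun x => ∏ i, σ (x i)

noncomputable def prodState {n : ℕ} (σ : Fin n → Fin 2 → ℂ) : (Fin n → Fin 2) → ℂ :=
  fun x => ∏ j, σ j (x j)

def qubitUnit (σ : Fin 2 → ℂ) : Prop :=
  ‖σ 0‖ ^ 2 + ‖σ 1‖ ^ 2 = 1

noncomputable def dicke (n k : ℕ) : (Fin n → Fin 2) → ℂ :=
  fun x => if (∑ i, ((x i : ℕ))) = k then ((1 / Real.sqrt (n.choose k) : ℝ) : ℂ) else 0

noncomputable def bloch (θ ph : ℝ) : Fin 2 → ℂ :=
  fun i => if i = 0 then ((Real.cos (θ/2) : ℝ) : ℂ)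
           else Complex.exp (Complex.I * ph) * ((Real.sin (θ/2) : ℝ) : ℂ)

def isCPP (n : ℕ) (ψ : (Fin n → Fin 2) → ℂ) (σ : Fin 2 → ℂ) : Prop :=
  qubitUnit σ ∧ ∀ τ, qubitUnit τ →
    ‖overlap (symmPow n τ) ψ‖ ≤ ‖overlap (symmPow n σ) ψ‖

noncomputable def tetrahedronState : (Fin 4 → Fin 2) → ℂ :=
  fun x => ((Real.sqrt (1/3) : ℝ) : ℂ) * dicke 4 0 x + ((Real.sqrt (2/3) : ℝ) : ℂ) * dicke 4 3 x

noncomputable def e0' : Fin 2 → ℂ := fun i => if i = 0 then 1 else 0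

lemma sum_pi4 (f : (Fin 4 → Fin 2) → ℂ) :
    ∑ x, f x = ∑ a : Fin 2, ∑ b : Fin 2, ∑ c : Fin 2, ∑ d : Fin 2, f ![a,b,c,d] := by
  rw [show (∑ x, f x) = ∑ p : Fin 2 × Fin 2 × Fin 2 × Fin 2, f ![p.1, p.2.1, p.2.2.1, p.2.2.2] from
    (Fintype.sum_bijective (fun p : Fin 2 × Fin 2 × Fin 2 × Fin 2 => ![p.1, p.2.1, p.2.2.1, p.2.2.2])
      (by decide) _ _ (fun p => rfl)).symm]
  simp only [Fintype.sum_prod_type]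

lemma overlap_eq (σ : Fin 2 → ℂ) :
    overlap (symmPow 4 σ) tetrahedronState =
      ((Real.sqrt (1/3) : ℝ) : ℂ) * (starRingEnd ℂ (σ 0))^4
      + 2 * ((Real.sqrt (2/3) : ℝ) : ℂ) * (starRingEnd ℂ (σ 0)) * (starRingEnd ℂ (σ 1))^3 := by
  have h4 : Real.sqrt 4 = 2 := by
    rw [show (4:ℝ) = 2^2 by norm_num, Real.sqrt_sq (by norm_num)]
  rw [overlap, sum_pi4]
  simp only [symmPow, tetrahedronState, dicke, Fin.prod_univ_four, Fin.sum_univ_four,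
    Fin.sum_univ_two, Matrix.cons_val_zero, Matrix.cons_val_one, Matrix.head_cons,
    Matrix.cons_val_two, Matrix.tail_cons, Matrix.cons_val_three]
  norm_num [Fin.sum_univ_two, h4]
  ring

lemma abs_overlap_le (σ : Fin 2 → ℂ) (h : qubitUnit σ) :
    ‖overlap (symmPow 4 σ) tetrahedronState‖ ≤ Real.sqrt (1/3) := by
  set a := ‖σ 0‖ with ha
  set b := ‖σ 1‖ with hb
  have ha0 : 0 ≤ a := norm_nonneg _
  have hb0 : 0 ≤ b := norm_nonneg _
  have hs3 : (0:ℝ) ≤ Real.sqrt (1/3) := Real.sqrt_nonneg _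
  have hsplit : Real.sqrt (2/3) = Real.sqrt 2 * Real.sqrt (1/3) := by
    rw [← Real.sqrt_mul (by norm_num : (0:ℝ) ≤ 2)]
    norm_num
  have key : a^4 + 2 * Real.sqrt 2 * a * b^3 ≤ 1 := by
    have h2 : Real.sqrt 2 ^ 2 = 2 := Real.sq_sqrt (by norm_num)
    have e : (Real.sqrt 2*a*b - b^2)^2 = 2*(a^2*b^2) - 2*Real.sqrt 2*a*b^3 + b^4 := by
      have : (Real.sqrt 2*a*b - b^2)^2 = Real.sqrt 2^2*(a^2*b^2) - 2*Real.sqrt 2*a*b^3 + b^4 := by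
        ring
      rw [this, h2]
    have e2 : (0:ℝ) ≤ 2*(a^2*b^2) - 2*Real.sqrt 2*a*b^3 + b^4 := e ▸ sq_nonneg _
    have h' : a^2 + b^2 = 1 := h
    nlinarith [e2, h']
  rw [overlap_eq]
  calc ‖((Real.sqrt (1/3) : ℝ) : ℂ) * (starRingEnd ℂ (σ 0))^4
      + 2 * ((Real.sqrt (2/3) : ℝ) : ℂ) * (starRingEnd ℂ (σ 0)) * (starRingEnd ℂ (σ 1))^3‖
      ≤ ‖((Real.sqrt (1/3) : ℝ) : ℂ) * (starRingEnd ℂ (σ 0))^4‖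
        + ‖2 * ((Real.sqrt (2/3) : ℝ) : ℂ) * (starRingEnd ℂ (σ 0)) * (starRingEnd ℂ (σ 1))^3‖ :=
      norm_add_le _ _
    _ = Real.sqrt (1/3) * a^4 + 2 * Real.sqrt (2/3) * a * b^3 := by
      simp only [norm_mul, norm_pow, Complex.norm_real, Real.norm_eq_abs, Complex.norm_conj, ← ha, ← hb]
      rw [abs_of_nonneg hs3, abs_of_nonneg (Real.sqrt_nonneg _)]
      simp [Complex.norm_two]
    _ = Real.sqrt (1/3) * (a^4 + 2 * Real.sqrt 2 * a * b^3) := by rw [hsplit]; ring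
    _ ≤ Real.sqrt (1/3) * 1 := by
      apply mul_le_mul_of_nonneg_left key hs3
    _ = Real.sqrt (1/3) := mul_one _

theorem tetrahedron_state_geometric_measure :
    (∀ σ : Fin 2 → ℂ, qubitUnit σ →
      ‖overlap (symmPow 4 σ) tetrahedronState‖ ^ 2 ≤ 1 / 3) ∧
    ‖overlap (symmPow 4 e0') tetrahedronState‖ ^ 2 = 1 / 3 ∧
    - Real.logb 2 (sSup {a : ℝ | ∃ σ : Fin 2 → ℂ, qubitUnit σ ∧
        a = ‖overlap (symmPow 4 σ) tetrahedronState‖ ^ 2})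
      = Real.logb 2 3 := by
  have hsq : Real.sqrt (1/3) ^ 2 = 1/3 := Real.sq_sqrt (by norm_num)
  have part1 : ∀ σ : Fin 2 → ℂ, qubitUnit σ →
      ‖overlap (symmPow 4 σ) tetrahedronState‖ ^ 2 ≤ 1 / 3 := by
    intro σ hσ
    calc ‖overlap (symmPow 4 σ) tetrahedronState‖ ^ 2
        ≤ Real.sqrt (1/3) ^ 2 :=
          pow_le_pow_left₀ (norm_nonneg _) (abs_overlap_le σ hσ) 2
      _ = 1/3 := hsq
  have part2 : ‖overlap (symmPow 4 e0') tetrahedronState‖ ^ 2 = 1 / 3 := by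
    rw [overlap_eq]
    simp [e0']
  have hunit : qubitUnit e0' := by simp [qubitUnit, e0']
  refine ⟨part1, part2, ?_⟩
  have hmem : (1/3 : ℝ) ∈ {a : ℝ | ∃ σ : Fin 2 → ℂ, qubitUnit σ ∧
      a = ‖overlap (symmPow 4 σ) tetrahedronState‖ ^ 2} :=
    ⟨e0', hunit, part2.symm⟩
  have hub : ∀ a ∈ {a : ℝ | ∃ σ : Fin 2 → ℂ, qubitUnit σ ∧
      a = ‖overlap (symmPow 4 σ) tetrahedronState‖ ^ 2}, a ≤ 1/3 := by
    rintro a ⟨σ, hσ, rfl⟩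
    exact part1 σ hσ
  have hsup : sSup {a : ℝ | ∃ σ : Fin 2 → ℂ, qubitUnit σ ∧
      a = ‖overlap (symmPow 4 σ) tetrahedronState‖ ^ 2} = 1/3 :=
    le_antisymm (csSup_le ⟨1/3, hmem⟩ hub) (le_csSup ⟨1/3, hub⟩ hmem)
  rw [hsup, show (1/3:ℝ) = 3⁻¹ by norm_num, Real.logb_inv, neg_neg]
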